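/- Let r > 2, c > 0, C₁ > 0, and β ∈ ℂ. There exists a constant C > 0, depending only on r, c, C₁, and |β|, with the following property. Let γ ∈ ℂ with γ ≠ 0, and let ν⁻, ν⁺ ∈ ℂ satisfy |ν⁻| ≤ C₁|γ|, |ν⁺| ≤ C₁|γ|, Re ν⁻ ≤ −c|γ|, and Re ν⁺ ≥ c|γ|. Define H : ℝ → ℂ by H(ξ) = (β ν⁻/γ) e^{ν⁻ ξ} for ξ ≥ 0 and H(ξ) = (β ν⁺/γ) e^{ν⁺ ξ} for ξ < 0. Then for every odd measurable g : ℝ → ℝ with |g(y)| ≤ M⟨y⟩^{−r} for all y ∈ ℝ, one has ∫_ℝ ⟨x⟩ |∫_ℝ H(x−y) g(y) dy| dx ≤ C M / |γ|. -/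

import Mathlib

open MeasureTheory Set


private lemma br_one_le (x : ℝ) : 1 ≤ Real.sqrt (1 + x ^ 2) := by
  have h := Real.sqrt_le_sqrt (show (1:ℝ) ≤ 1 + x ^ 2 by nlinarith [sq_nonneg x])
  simpa using h

private lemma br_pos (x : ℝ) : 0 < Real.sqrt (1 + x ^ 2) :=
  lt_of_lt_of_le one_pos (br_one_le x)

private lemma abs_le_br (x : ℝ) : |x| ≤ Real.sqrt (1 + x ^ 2) := by
  rw [← Real.sqrt_sq_eq_abs]
  exact Real.sqrt_le_sqrt (by nlinarith)

private lemma br_mono {x y : ℝ} (h : |x| ≤ |y|) :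
    Real.sqrt (1 + x ^ 2) ≤ Real.sqrt (1 + y ^ 2) := by
  apply Real.sqrt_le_sqrt
  nlinarith [sq_abs x, sq_abs y, abs_nonneg x, abs_nonneg y]

private lemma br_diff (x y : ℝ) :
    Real.sqrt (1 + x ^ 2) ≤ Real.sqrt (1 + y ^ 2) + |(|x| - |y|)| := by
  rcases le_total (|x|) (|y|) with h | h
  · have := br_mono h
    have := abs_nonneg (|x| - |y|)
    linarith
  · set u := Real.sqrt (1 + y ^ 2) with hu
    have hu0 : 0 ≤ u := Real.sqrt_nonneg _
    have hu2 : u ^ 2 = 1 + y ^ 2 := Real.sq_sqrt (by positivity)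
    have hyu : |y| ≤ u := abs_le_br y
    have habs : |(|x| - |y|)| = |x| - |y| := abs_of_nonneg (by linarith)
    rw [habs]
    have h2 : 1 + x ^ 2 ≤ (u + (|x| - |y|)) ^ 2 := by
      nlinarith [sq_abs x, sq_abs y, abs_nonneg x, abs_nonneg y]
    calc Real.sqrt (1 + x ^ 2) ≤ Real.sqrt ((u + (|x| - |y|)) ^ 2) := Real.sqrt_le_sqrt h2
      _ = u + (|x| - |y|) := by rw [Real.sqrt_sq (by linarith)]

private lemma jap_cont (s : ℝ) : Continuous (fun y : ℝ => Real.sqrt (1 + y ^ 2) ^ (-s)) := by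
  apply Continuous.rpow_const
  · exact Real.continuous_sqrt.comp (by continuity)
  · exact fun y => Or.inl (ne_of_gt (br_pos y))

private lemma jap_integrable {s : ℝ} (hs : 1 < s) :
    Integrable (fun y : ℝ => Real.sqrt (1 + y ^ 2) ^ (-s)) := by
  have hmaj : Integrable (fun y : ℝ => Real.sqrt 2 ^ s * (1 + ‖y‖) ^ (-s)) :=
    (integrable_one_add_norm (by simpa using hs)).const_mul _
  refine hmaj.mono' (jap_cont s).aestronglyMeasurable (Filter.Eventually.of_forall fun y => ?_)
  have h1 : (0:ℝ) < 1 + ‖y‖ := by positivity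
  have h2 : 1 + ‖y‖ ≤ Real.sqrt 2 * Real.sqrt (1 + y ^ 2) := by
    rw [← Real.sqrt_mul (by norm_num)]
    have : 1 + ‖y‖ = Real.sqrt ((1 + ‖y‖) ^ 2) := (Real.sqrt_sq (by positivity)).symm
    rw [this]
    apply Real.sqrt_le_sqrt
    have : ‖y‖ ^ 2 = y ^ 2 := by rw [Real.norm_eq_abs, sq_abs]
    nlinarith [sq_nonneg (‖y‖ - 1), norm_nonneg y]
  have hb := br_pos y
  have key : (1 + ‖y‖) ^ s ≤ Real.sqrt 2 ^ s * Real.sqrt (1 + y ^ 2) ^ s := by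
    rw [← Real.mul_rpow (by positivity) (by positivity)]
    exact Real.rpow_le_rpow (by positivity) h2 (by linarith)
  have hnn : 0 ≤ Real.sqrt (1 + y ^ 2) ^ (-s) := Real.rpow_nonneg hb.le _
  have h3 : (0:ℝ) < (1 + ‖y‖) ^ s := by positivity
  have h4 : (0:ℝ) < Real.sqrt (1 + y ^ 2) ^ s := by positivity
  rw [Real.norm_of_nonneg hnn, Real.rpow_neg hb.le, Real.rpow_neg h1.le, ← one_div,
    show Real.sqrt 2 ^ s * ((1 + ‖y‖) ^ s)⁻¹ = Real.sqrt 2 ^ s / ((1 + ‖y‖) ^ s) from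
      (div_eq_mul_inv _ _).symm,
    div_le_div_iff₀ h4 h3]
  nlinarith [key]

private lemma model_integrableOn {b : ℝ} (hb : 0 < b) (d e : ℝ) :
    IntegrableOn (fun t : ℝ => (d + e * t) * Real.exp (-(b * t))) (Ioi 0) := by
  have h1 : IntegrableOn (fun t : ℝ => Real.exp (-b * t)) (Ioi 0) :=
    exp_neg_integrableOn_Ioi 0 hb
  have h2 : IntegrableOn (fun t : ℝ => t * Real.exp (-(b * t))) (Ioi 0) := by
    have := integrableOn_rpow_mul_exp_neg_mul_rpow (p := 1) (s := 1) (b := b)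
      (by norm_num) one_pos hb
    refine this.congr_fun (fun t ht => ?_) measurableSet_Ioi
    simp [Real.rpow_one]
  have h1' : IntegrableOn (fun t : ℝ => d * Real.exp (-(b * t))) (Ioi 0) := by
    refine IntegrableOn.congr_fun (h1.const_mul d) (fun t _ => ?_) measurableSet_Ioi
    ring_nf
  have h3 : IntegrableOn ((fun t : ℝ => d * Real.exp (-(b * t))) +
      fun t : ℝ => e * (t * Real.exp (-(b * t)))) (Ioi 0) := h1'.add (h2.const_mul e)
  refine IntegrableOn.congr_fun h3 (fun t _ => ?_) measurableSet_Ioi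
  simp only [Pi.add_apply]
  ring

private lemma model_integralOn {b : ℝ} (hb : 0 < b) (d e : ℝ) :
    ∫ t in Ioi (0:ℝ), (d + e * t) * Real.exp (-(b * t)) = d / b + e / b ^ 2 := by
  have h1 : IntegrableOn (fun t : ℝ => Real.exp (-(b * t))) (Ioi 0) :=
    (exp_neg_integrableOn_Ioi 0 hb).congr_fun (fun t _ => by ring_nf) measurableSet_Ioi
  have h2 : IntegrableOn (fun t : ℝ => t * Real.exp (-(b * t))) (Ioi 0) := by
    have := integrableOn_rpow_mul_exp_neg_mul_rpow (p := 1) (s := 1) (b := b)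
      (by norm_num) one_pos hb
    refine this.congr_fun (fun t ht => ?_) measurableSet_Ioi
    simp [Real.rpow_one]
  have e1 : ∫ t in Ioi (0:ℝ), Real.exp (-(b * t)) = 1 / b := by
    have := Real.integral_rpow_mul_exp_neg_mul_Ioi (a := 1) (r := b) one_pos hb
    simp only [sub_self, Real.rpow_zero, one_mul, Real.rpow_one, Real.Gamma_one, mul_one] at this
    rw [this]
  have e2 : ∫ t in Ioi (0:ℝ), t * Real.exp (-(b * t)) = 1 / b ^ 2 := by
    have := Real.integral_rpow_mul_exp_neg_mul_Ioi (a := 2) (r := b) two_pos hb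
    have hg2 : Real.Gamma 2 = 1 := by
      rw [show (2:ℝ) = 1 + 1 by norm_num, Real.Gamma_add_one one_ne_zero, Real.Gamma_one, mul_one]
    rw [show (2:ℝ) - 1 = 1 by norm_num] at this
    simp only [Real.rpow_one, hg2, mul_one] at this
    rw [this, show ((1:ℝ)/b) ^ (2:ℝ) = (1/b) ^ (2:ℕ) from by
      rw [← Real.rpow_natCast]; norm_num, div_pow, one_pow]
  calc ∫ t in Ioi (0:ℝ), (d + e * t) * Real.exp (-(b * t))
      = ∫ t in Ioi (0:ℝ), (d * Real.exp (-(b * t)) + e * (t * Real.exp (-(b * t)))) := by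
        apply setIntegral_congr_fun measurableSet_Ioi (fun t _ => by ring)
    _ = d * (1/b) + e * (1/b^2) := by
        rw [integral_add (h1.const_mul d) (h2.const_mul e), integral_const_mul,
          integral_const_mul, e1, e2]
    _ = d / b + e / b ^ 2 := by ring

private lemma integrable_comp_abs {f : ℝ → ℝ} (hf : IntegrableOn f (Ioi 0)) :
    Integrable (fun x : ℝ => f |x|) := by
  have int_Ioi : IntegrableOn (fun x : ℝ => f |x|) (Ioi 0) := by
    refine IntegrableOn.congr_fun hf (fun x hx => ?_) measurableSet_Ioi
    rw [abs_of_pos hx]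
  have int_Iic : IntegrableOn (fun x : ℝ ↦ f |x|) (Iic 0) := by
    rw [← Measure.map_neg_eq_self (volume : Measure ℝ)]
    have m : MeasurableEmbedding fun x : ℝ => -x := (Homeomorph.neg ℝ).measurableEmbedding
    rw [m.integrableOn_map_iff]
    simp_rw [Function.comp_def, abs_neg, neg_preimage, neg_Iic, neg_zero]
    exact (integrableOn_Ici_iff_integrableOn_Ioi).2 int_Ioi
  have huniv := int_Iic.union int_Ioi
  rwa [Iic_union_Ioi, integrableOn_univ] at huniv

/-- reflection bound for the lintegral. -/
private lemma refl_le (v : ℝ → ℝ) (y' : ℝ) :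
    (∫⁻ x : ℝ, ENNReal.ofReal (v |(|x| - y')|)) ≤ 2 * ∫⁻ s : ℝ, ENNReal.ofReal (v |s|) := by
  have hsplit := lintegral_add_compl (μ := volume) (fun x : ℝ => ENNReal.ofReal (v |(|x| - y')|))
    (measurableSet_Ici (a := (0:ℝ)))
  rw [← hsplit, compl_Ici]
  have h1 : (∫⁻ x in Ici (0:ℝ), ENNReal.ofReal (v |(|x| - y')|))
      ≤ ∫⁻ s : ℝ, ENNReal.ofReal (v |s|) := by
    have he : ∫⁻ x in Ici (0:ℝ), ENNReal.ofReal (v |(|x| - y')|)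
        = ∫⁻ x in Ici (0:ℝ), ENNReal.ofReal (v |x + -y'|) := by
      refine setLIntegral_congr_fun measurableSet_Ici (
        fun x hx => ?_)
      rw [show |x| = x from abs_of_nonneg hx, sub_eq_add_neg]
    rw [he]
    refine le_trans (setLIntegral_le_lintegral _ _) ?_
    rw [lintegral_add_right_eq_self (fun s : ℝ => ENNReal.ofReal (v |s|)) (-y')]
  have h2 : (∫⁻ x in Iio (0:ℝ), ENNReal.ofReal (v |(|x| - y')|))
      ≤ ∫⁻ s : ℝ, ENNReal.ofReal (v |s|) := by
    have he : ∫⁻ x in Iio (0:ℝ), ENNReal.ofReal (v |(|x| - y')|)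
        = ∫⁻ x in Iio (0:ℝ), ENNReal.ofReal (v |x + y'|) := by
      refine setLIntegral_congr_fun measurableSet_Iio (
        fun x hx => ?_)
      rw [show |x| = -x from abs_of_neg hx, show -x - y' = -(x + y') by ring, abs_neg]
    rw [he]
    refine le_trans (setLIntegral_le_lintegral _ _) ?_
    rw [lintegral_add_right_eq_self (fun s : ℝ => ENNReal.ofReal (v |s|)) y']
  calc (∫⁻ x in Ici (0:ℝ), ENNReal.ofReal (v |(|x| - y')|)) +
        ∫⁻ x in Iio (0:ℝ), ENNReal.ofReal (v |(|x| - y')|)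
      ≤ (∫⁻ s : ℝ, ENNReal.ofReal (v |s|)) + ∫⁻ s : ℝ, ENNReal.ofReal (v |s|) :=
        add_le_add h1 h2
    _ = 2 * ∫⁻ s : ℝ, ENNReal.ofReal (v |s|) := (two_mul _).symm

private lemma master {b d e : ℝ} (hb : 0 < b) (hd : 0 ≤ d) (he : 0 ≤ e) (y' : ℝ) :
    (∫⁻ x : ℝ, ENNReal.ofReal ((d + e * |(|x| - y')|) * Real.exp (-(b * |(|x| - y')|))))
      ≤ ENNReal.ofReal (4 * (d / b + e / b ^ 2)) := by
  have h1 := refl_le (fun t => (d + e * t) * Real.exp (-(b * t))) y'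
  refine le_trans h1 ?_
  have hint : Integrable (fun s : ℝ => (d + e * |s|) * Real.exp (-(b * |s|))) :=
    integrable_comp_abs (model_integrableOn hb d e)
  have hnn : 0 ≤ᵐ[volume] fun s : ℝ => (d + e * |s|) * Real.exp (-(b * |s|)) :=
    Filter.Eventually.of_forall fun s => by positivity
  have he2 : (∫⁻ s : ℝ, ENNReal.ofReal ((d + e * |s|) * Real.exp (-(b * |s|))))
      = ENNReal.ofReal (∫ s : ℝ, (d + e * |s|) * Real.exp (-(b * |s|))) :=
    (ofReal_integral_eq_lintegral_ofReal hint hnn).symm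
  have he3 : (∫ s : ℝ, (d + e * |s|) * Real.exp (-(b * |s|))) = 2 * (d / b + e / b ^ 2) := by
    rw [integral_comp_abs (f := fun t => (d + e * t) * Real.exp (-(b * t))),
      model_integralOn hb d e]
  rw [he2, he3, ← ENNReal.ofReal_ofNat 2, ← ENNReal.ofReal_mul (by norm_num)]
  apply ENNReal.ofReal_le_ofReal
  nlinarith [div_nonneg hd hb.le, div_nonneg he (by positivity : (0:ℝ) ≤ b ^ 2)]

/-- `|1 - e^z| ≤ 2 min(1,|z|)` for `Re z ≤ 0`. -/
private lemma one_sub_exp_bound {z : ℂ} (hz : z.re ≤ 0) :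
    ‖(1 - Complex.exp z)‖ ≤ 2 * min 1 (‖z‖) := by
  by_cases h : ‖z‖ ≤ 1
  · rw [min_eq_right h, show (1:ℂ) - Complex.exp z = -(Complex.exp z - 1) by ring, norm_neg]
    exact Complex.norm_exp_sub_one_le h
  · rw [min_eq_left (le_of_not_ge h)]
    calc ‖(1 - Complex.exp z)‖
        ≤ ‖(1:ℂ)‖ + ‖(Complex.exp z)‖ := by
          simpa [sub_eq_add_neg] using norm_add_le 1 (-(Complex.exp z))
      _ ≤ 1 + 1 := by
          simp only [norm_one, Complex.norm_exp]
          have : Real.exp z.re ≤ 1 := Real.exp_le_one_iff.2 hz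
          linarith
      _ = 2 * 1 := by norm_num

private noncomputable def Hker (β γ νm νp : ℂ) (ξ : ℝ) : ℂ :=
  if 0 ≤ ξ then β * νm / γ * Complex.exp (νm * (ξ : ℂ))
  else β * νp / γ * Complex.exp (νp * (ξ : ℂ))

private noncomputable def Phi (K a c : ℝ) (x y : ℝ) : ℝ :=
  K * (if |y| < |x| then min 1 (a * |y|) * Real.exp (-(c * a) * (|x| - |y|))
       else Real.exp (-(c * a) * (|y| - |x|)))

private lemma final_real {c a d m K yabs : ℝ} (hc : 0 < c) (ha : 0 < a) (hK : 0 ≤ K)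
    (hd1 : 1 ≤ d) (hm0 : 0 ≤ m) (hm1 : m ≤ 1) (hm2 : m ≤ a * yabs) (hyd : yabs ≤ d) :
    K * (m * (4 * (d / (c * a) + 1 / (c * a) ^ 2)) + 4 * (d / (c * a) + 0 / (c * a) ^ 2))
      ≤ K * (8 / c + 4 / c ^ 2) * d / a := by
  have key : m * (4 * (d / (c * a) + 1 / (c * a) ^ 2)) + 4 * (d / (c * a) + 0 / (c * a) ^ 2)
      ≤ (8 / c + 4 / c ^ 2) * d / a := by
    have h1 : m * (4 * (d / (c * a))) ≤ 4 * (d / (c * a)) := by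
      nlinarith [mul_le_mul_of_nonneg_right hm1 (show (0:ℝ) ≤ 4 * (d / (c * a)) by positivity)]
    have h2 : m * (4 / (c * a) ^ 2) ≤ (a * yabs) * (4 / (c * a) ^ 2) :=
      mul_le_mul_of_nonneg_right hm2 (by positivity)
    have e2 : (a * yabs) * (4 / (c * a) ^ 2) = 4 * yabs / (c ^ 2 * a) := by
      field_simp
    have h2' : m * (4 / (c * a) ^ 2) ≤ 4 * d / (c ^ 2 * a) := by
      refine le_trans h2 ?_
      rw [e2]
      exact (div_le_div_iff_of_pos_right (by positivity)).2 (by linarith)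
    calc m * (4 * (d / (c * a) + 1 / (c * a) ^ 2)) + 4 * (d / (c * a) + 0 / (c * a) ^ 2)
        = m * (4 * (d / (c * a))) + m * (4 / (c * a) ^ 2) + 4 * (d / (c * a)) := by ring
      _ ≤ 4 * (d / (c * a)) + 4 * d / (c ^ 2 * a) + 4 * (d / (c * a)) := by linarith
      _ = (8 / c + 4 / c ^ 2) * d / a := by field_simp; ring
  calc K * (m * (4 * (d / (c * a) + 1 / (c * a) ^ 2)) + 4 * (d / (c * a) + 0 / (c * a) ^ 2))
      ≤ K * ((8 / c + 4 / c ^ 2) * d / a) := mul_le_mul_of_nonneg_left key hK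
    _ = K * (8 / c + 4 / c ^ 2) * d / a := by ring

private lemma Phi_nonneg {K a c : ℝ} (hK : 0 ≤ K) (ha : 0 ≤ a) (x y : ℝ) :
    0 ≤ Phi K a c x y := by
  unfold Phi
  split_ifs with h
  · exact mul_nonneg hK (mul_nonneg (le_min zero_le_one (mul_nonneg ha (abs_nonneg y)))
      (Real.exp_nonneg _))
  · exact mul_nonneg hK (Real.exp_nonneg _)

set_option maxHeartbeats 1000000 in
private lemma x_bound {K a c : ℝ} (hK : 0 ≤ K) (ha : 0 < a) (hc : 0 < c) (y : ℝ) :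
    (∫⁻ x : ℝ, ENNReal.ofReal (Real.sqrt (1 + x ^ 2) * Phi K a c x y))
      ≤ ENNReal.ofReal (K * (8 / c + 4 / c ^ 2) * Real.sqrt (1 + y ^ 2) / a) := by
  set d := Real.sqrt (1 + y ^ 2) with hd_def
  have hd1 : 1 ≤ d := br_one_le y
  have hd0 : 0 ≤ d := by linarith
  have hyd : |y| ≤ d := abs_le_br y
  have hm0 : 0 ≤ min 1 (a * |y|) := le_min zero_le_one (by positivity)
  have hb : 0 < c * a := by positivity
  have hpt : ∀ x : ℝ, Real.sqrt (1 + x ^ 2) * Phi K a c x y ≤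
      K * (min 1 (a * |y|) *
          ((d + 1 * |(|x| - |y|)|) * Real.exp (-(c * a * |(|x| - |y|)|)))
        + (d + 0 * |(|x| - |y|)|) * Real.exp (-(c * a * |(|x| - |y|)|))) := by
    intro x
    have hbrd : Real.sqrt (1 + x ^ 2) ≤ d + |(|x| - |y|)| := br_diff x y
    unfold Phi
    split_ifs with hxy
    · have hw : 0 ≤ |x| - |y| := by linarith [hxy.le]
      have hw_eq : |(|x| - |y|)| = |x| - |y| := abs_of_nonneg hw
      rw [hw_eq] at hbrd ⊢
      rw [show -(c * a * (|x| - |y|)) = -(c * a) * (|x| - |y|) by ring]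
      set E := Real.exp (-(c * a) * (|x| - |y|)) with hE_def
      have hE0 : 0 ≤ E := Real.exp_nonneg _
      have step : Real.sqrt (1 + x ^ 2) * (K * (min 1 (a * |y|) * E))
          ≤ (d + (|x| - |y|)) * (K * (min 1 (a * |y|) * E)) :=
        mul_le_mul_of_nonneg_right hbrd (by positivity)
      calc Real.sqrt (1 + x ^ 2) * (K * (min 1 (a * |y|) * E))
          ≤ (d + (|x| - |y|)) * (K * (min 1 (a * |y|) * E)) := step
        _ = K * (min 1 (a * |y|) * ((d + 1 * (|x| - |y|)) * E)) := by ring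
        _ ≤ K * (min 1 (a * |y|) * ((d + 1 * (|x| - |y|)) * E)
              + (d + 0 * (|x| - |y|)) * E) := by
            nlinarith [mul_nonneg hK (mul_nonneg (by linarith : (0:ℝ) ≤ d + 0 * (|x| - |y|)) hE0)]
    · push_neg at hxy
      have hw_eq : |(|x| - |y|)| = |y| - |x| := by
        rw [abs_of_nonpos (by linarith : |x| - |y| ≤ 0)]; ring
      rw [hw_eq]
      rw [show -(c * a * (|y| - |x|)) = -(c * a) * (|y| - |x|) by ring]
      set E := Real.exp (-(c * a) * (|y| - |x|)) with hE_def
      have hE0 : 0 ≤ E := Real.exp_nonneg _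
      have hbm : Real.sqrt (1 + x ^ 2) ≤ d := br_mono hxy
      have step : Real.sqrt (1 + x ^ 2) * (K * E) ≤ d * (K * E) :=
        mul_le_mul_of_nonneg_right hbm (by positivity)
      calc Real.sqrt (1 + x ^ 2) * (K * E) ≤ d * (K * E) := step
        _ = K * ((d + 0 * (|y| - |x|)) * E) := by ring
        _ ≤ K * (min 1 (a * |y|) * ((d + 1 * (|y| - |x|)) * E)
              + (d + 0 * (|y| - |x|)) * E) := by
            nlinarith [mul_nonneg hK (mul_nonneg hm0 (mul_nonneg
              (by nlinarith : (0:ℝ) ≤ d + 1 * (|y| - |x|)) hE0))]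
  have hw_meas : Measurable fun x : ℝ => |(|x| - |y|)| :=
    (measurable_id.abs.sub measurable_const).abs
  have hA_meas : Measurable fun x : ℝ =>
      (d + 1 * |(|x| - |y|)|) * Real.exp (-(c * a * |(|x| - |y|)|)) :=
    (measurable_const.add (hw_meas.const_mul 1)).mul
      (Real.measurable_exp.comp (hw_meas.const_mul (c * a)).neg)
  have hB_meas : Measurable fun x : ℝ =>
      (d + 0 * |(|x| - |y|)|) * Real.exp (-(c * a * |(|x| - |y|)|)) :=
    (measurable_const.add (hw_meas.const_mul 0)).mul
      (Real.measurable_exp.comp (hw_meas.const_mul (c * a)).neg)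
  have hsplit : ∀ x : ℝ, ENNReal.ofReal (K * (min 1 (a * |y|) *
          ((d + 1 * |(|x| - |y|)|) * Real.exp (-(c * a * |(|x| - |y|)|)))
        + (d + 0 * |(|x| - |y|)|) * Real.exp (-(c * a * |(|x| - |y|)|)))) =
      ENNReal.ofReal K * (ENNReal.ofReal (min 1 (a * |y|)) *
          ENNReal.ofReal ((d + 1 * |(|x| - |y|)|) * Real.exp (-(c * a * |(|x| - |y|)|)))
        + ENNReal.ofReal ((d + 0 * |(|x| - |y|)|) * Real.exp (-(c * a * |(|x| - |y|)|)))) := by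
    intro x
    rw [ENNReal.ofReal_mul hK, ENNReal.ofReal_add (by positivity) (by positivity),
      ENNReal.ofReal_mul hm0]
  calc (∫⁻ x : ℝ, ENNReal.ofReal (Real.sqrt (1 + x ^ 2) * Phi K a c x y))
      ≤ ∫⁻ x : ℝ, ENNReal.ofReal (K * (min 1 (a * |y|) *
          ((d + 1 * |(|x| - |y|)|) * Real.exp (-(c * a * |(|x| - |y|)|)))
        + (d + 0 * |(|x| - |y|)|) * Real.exp (-(c * a * |(|x| - |y|)|)))) :=
        lintegral_mono fun x => ENNReal.ofReal_le_ofReal (hpt x)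
    _ = ENNReal.ofReal K * (ENNReal.ofReal (min 1 (a * |y|)) *
          (∫⁻ x : ℝ, ENNReal.ofReal ((d + 1 * |(|x| - |y|)|) *
            Real.exp (-(c * a * |(|x| - |y|)|))))
        + ∫⁻ x : ℝ, ENNReal.ofReal ((d + 0 * |(|x| - |y|)|) *
            Real.exp (-(c * a * |(|x| - |y|)|)))) := by
        simp_rw [hsplit]
        rw [lintegral_const_mul' _ _ ENNReal.ofReal_ne_top,
          lintegral_add_left (hA_meas.ennreal_ofReal.const_mul _),
          lintegral_const_mul' _ _ ENNReal.ofReal_ne_top]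
    _ ≤ ENNReal.ofReal K * (ENNReal.ofReal (min 1 (a * |y|)) *
          ENNReal.ofReal (4 * (d / (c * a) + 1 / (c * a) ^ 2))
        + ENNReal.ofReal (4 * (d / (c * a) + 0 / (c * a) ^ 2))) := by
        refine mul_le_mul_right (add_le_add (mul_le_mul_right ?_ _) ?_) _
        · exact master hb hd0 zero_le_one |y|
        · exact master hb hd0 le_rfl |y|
    _ = ENNReal.ofReal (K * (min 1 (a * |y|) * (4 * (d / (c * a) + 1 / (c * a) ^ 2))
        + 4 * (d / (c * a) + 0 / (c * a) ^ 2))) := by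
        rw [ENNReal.ofReal_mul hK, ENNReal.ofReal_add (by positivity) (by positivity),
          ENNReal.ofReal_mul hm0]
    _ ≤ ENNReal.ofReal (K * (8 / c + 4 / c ^ 2) * d / a) :=
        ENNReal.ofReal_le_ofReal
          (final_real hc ha hK hd1 hm0 (min_le_left _ _) (min_le_right _ _) hyd)

private lemma Hker_abs {c C₁ : ℝ} (hc : 0 < c) (hC₁ : 0 < C₁) (β γ νm νp : ℂ)
    (hγ : γ ≠ 0)
    (hm1 : ‖νm‖ ≤ C₁ * ‖γ‖) (hp1 : ‖νp‖ ≤ C₁ * ‖γ‖)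
    (hm2 : νm.re ≤ -c * ‖γ‖) (hp2 : c * ‖γ‖ ≤ νp.re) (t : ℝ) :
    ‖(Hker β γ νm νp t)‖
      ≤ C₁ * ‖β‖ * Real.exp (-(c * ‖γ‖) * |t|) := by
  unfold Hker
  set a := ‖γ‖ with ha_def
  have ha : 0 < a := norm_pos_iff.mpr hγ
  have hβ : 0 ≤ ‖β‖ := norm_nonneg β
  have hre : ∀ (ν : ℂ) (s : ℝ), (ν * (s : ℂ)).re = ν.re * s := fun ν s => by
    simp [Complex.mul_re]
  have hcoef : ∀ ν : ℂ, ‖ν‖ ≤ C₁ * a →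
      ‖(β * ν / γ)‖ ≤ C₁ * ‖β‖ := by
    intro ν hν
    rw [norm_div, norm_mul, div_le_iff₀ ha]
    calc ‖β‖ * ‖ν‖ ≤ ‖β‖ * (C₁ * a) :=
          mul_le_mul_of_nonneg_left hν hβ
      _ = C₁ * ‖β‖ * a := by ring
  split_ifs with h
  · rw [norm_mul, Complex.norm_exp, hre]
    have he : Real.exp (νm.re * t) ≤ Real.exp (-(c * a) * |t|) := by
      apply Real.exp_le_exp.2
      rw [abs_of_nonneg h]
      have := mul_le_mul_of_nonneg_right hm2 h
      nlinarith
    exact mul_le_mul (hcoef νm hm1) he (Real.exp_nonneg _) (by positivity)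
  · push_neg at h
    rw [norm_mul, Complex.norm_exp, hre]
    have he : Real.exp (νp.re * t) ≤ Real.exp (-(c * a) * |t|) := by
      apply Real.exp_le_exp.2
      rw [abs_of_neg h]
      have := mul_le_mul_of_nonpos_right hp2 h.le
      nlinarith
    exact mul_le_mul (hcoef νp hp1) he (Real.exp_nonneg _) (by positivity)

set_option maxHeartbeats 1000000 in
private lemma kernel_bd {c C₁ : ℝ} (hc : 0 < c) (hC₁ : 0 < C₁) (β γ νm νp : ℂ)
    (hγ : γ ≠ 0)
    (hm1 : ‖νm‖ ≤ C₁ * ‖γ‖) (hp1 : ‖νp‖ ≤ C₁ * ‖γ‖)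
    (hm2 : νm.re ≤ -c * ‖γ‖) (hp2 : c * ‖γ‖ ≤ νp.re) (x y : ℝ) :
    ‖(Hker β γ νm νp (x - y) - Hker β γ νm νp (x + y))‖ ≤
      Phi (C₁ * (‖β‖ + 1) * (4 * C₁ + 4)) (‖γ‖) c x y := by
  unfold Hker Phi
  set a := ‖γ‖ with ha_def
  have ha : 0 < a := norm_pos_iff.mpr hγ
  set K := C₁ * (‖β‖ + 1) * (4 * C₁ + 4) with hK_def
  have hβ : 0 ≤ ‖β‖ := norm_nonneg β
  have hK0 : 0 ≤ K := by positivity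
  have hre : ∀ (ν : ℂ) (t : ℝ), (ν * (t : ℂ)).re = ν.re * t := fun ν t => by
    simp [Complex.mul_re]
  have hcoef : ∀ ν : ℂ, ‖ν‖ ≤ C₁ * a →
      ‖(β * ν / γ)‖ ≤ C₁ * ‖β‖ := by
    intro ν hν
    rw [norm_div, norm_mul, div_le_iff₀ ha]
    calc ‖β‖ * ‖ν‖ ≤ ‖β‖ * (C₁ * a) := by
          exact mul_le_mul_of_nonneg_left hν hβ
      _ = C₁ * ‖β‖ * a := by ring
  have hmin_nn : 0 ≤ min 1 (a * |y|) := le_min zero_le_one (by positivity)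
  have hmin2 : min 1 (2 * C₁ * (a * |y|)) ≤ (2 * C₁ + 1) * min 1 (a * |y|) := by
    rcases le_total (a * |y|) 1 with h | h
    · rw [min_eq_right h]
      have h1 : min 1 (2 * C₁ * (a * |y|)) ≤ 2 * C₁ * (a * |y|) := min_le_right _ _
      nlinarith [mul_nonneg ha.le (abs_nonneg y)]
    · rw [min_eq_left h]
      have h1 : min 1 (2 * C₁ * (a * |y|)) ≤ 1 := min_le_left _ _
      nlinarith
  -- the elementary branch bound
  have habs_H : ∀ t : ℝ,
      ‖(if 0 ≤ t then β * νm / γ * Complex.exp (νm * (t : ℂ))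
        else β * νp / γ * Complex.exp (νp * (t : ℂ)))‖
        ≤ C₁ * ‖β‖ * Real.exp (-(c * a) * |t|) := by
    intro t
    split_ifs with h
    · rw [norm_mul, Complex.norm_exp, hre]
      have he : Real.exp (νm.re * t) ≤ Real.exp (-(c * a) * |t|) := by
        apply Real.exp_le_exp.2
        rw [abs_of_nonneg h]
        have := mul_le_mul_of_nonneg_right hm2 h
        nlinarith
      exact mul_le_mul (hcoef νm hm1) he (Real.exp_nonneg _) (by positivity)
    · push_neg at h
      rw [norm_mul, Complex.norm_exp, hre]
      have he : Real.exp (νp.re * t) ≤ Real.exp (-(c * a) * |t|) := by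
        apply Real.exp_le_exp.2
        rw [abs_of_neg h]
        have := mul_le_mul_of_nonpos_right hp2 h.le
        nlinarith
      exact mul_le_mul (hcoef νp hp1) he (Real.exp_nonneg _) (by positivity)
  by_cases hxy : |y| < |x|
  · rw [if_pos hxy]
    rcases lt_abs.mp hxy with hA | hB
    -- Case A : |y| < x
    · have hx0 : (0 : ℝ) < x := lt_of_le_of_lt (abs_nonneg y) hA
      rw [abs_of_pos hx0]
      have h1 : 0 ≤ x - y := by have := le_abs_self y; linarith
      have h2 : 0 ≤ x + y := by have := neg_abs_le y; linarith
      rw [if_pos h1, if_pos h2]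
      have harg1 : ((x - y : ℝ) : ℂ) = ((x - |y| : ℝ) : ℂ) + ((|y| - y : ℝ) : ℂ) := by
        push_cast; ring
      have harg2 : ((x + y : ℝ) : ℂ) = ((x - |y| : ℝ) : ℂ) + ((|y| + y : ℝ) : ℂ) := by
        push_cast; ring
      have hfac : β * νm / γ * Complex.exp (νm * ((x - y : ℝ) : ℂ)) -
          β * νm / γ * Complex.exp (νm * ((x + y : ℝ) : ℂ)) =
          β * νm / γ * Complex.exp (νm * ((x - |y| : ℝ) : ℂ)) *
            (Complex.exp (νm * ((|y| - y : ℝ) : ℂ)) -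
              Complex.exp (νm * ((|y| + y : ℝ) : ℂ))) := by
        rw [harg1, harg2, mul_add, mul_add, Complex.exp_add, Complex.exp_add]; ring
      rw [hfac, norm_mul, norm_mul, Complex.norm_exp]
      have hbr : ‖(Complex.exp (νm * ((|y| - y : ℝ) : ℂ)) -
          Complex.exp (νm * ((|y| + y : ℝ) : ℂ)))‖ =
          ‖(1 - Complex.exp (νm * ((2 * |y| : ℝ) : ℂ)))‖ := by
        rcases le_total 0 y with hy | hy
        · have e0 : (|y| - y : ℝ) = 0 := by rw [abs_of_nonneg hy]; ring
          have e2 : (|y| + y : ℝ) = 2 * |y| := by rw [abs_of_nonneg hy]; ring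
          rw [e0, e2, Complex.ofReal_zero, mul_zero, Complex.exp_zero]
        · have e0 : (|y| + y : ℝ) = 0 := by rw [abs_of_nonpos hy]; ring
          have e2 : (|y| - y : ℝ) = 2 * |y| := by rw [abs_of_nonpos hy]; ring
          rw [e0, e2, Complex.ofReal_zero, mul_zero, Complex.exp_zero,
            show Complex.exp (νm * ((2 * |y| : ℝ) : ℂ)) - 1 =
              -(1 - Complex.exp (νm * ((2 * |y| : ℝ) : ℂ))) by ring, norm_neg]
      rw [hbr]
      have hzre : (νm * ((2 * |y| : ℝ) : ℂ)).re ≤ 0 := by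
        rw [hre]
        apply mul_nonpos_of_nonpos_of_nonneg
        · nlinarith
        · positivity
      have hzabs : ‖(νm * ((2 * |y| : ℝ) : ℂ))‖ ≤ 2 * C₁ * (a * |y|) := by
        rw [norm_mul, Complex.norm_real, Real.norm_eq_abs, abs_of_nonneg (by positivity : (0:ℝ) ≤ 2 * |y|)]
        calc ‖νm‖ * (2 * |y|) ≤ C₁ * a * (2 * |y|) :=
              mul_le_mul_of_nonneg_right hm1 (by positivity)
          _ = 2 * C₁ * (a * |y|) := by ring
      have hbr2 : ‖(1 - Complex.exp (νm * ((2 * |y| : ℝ) : ℂ)))‖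
          ≤ (4 * C₁ + 2) * min 1 (a * |y|) := by
        refine le_trans (one_sub_exp_bound hzre) ?_
        have hmin1 : min 1 (‖(νm * ((2 * |y| : ℝ) : ℂ))‖)
            ≤ min 1 (2 * C₁ * (a * |y|)) := min_le_min le_rfl hzabs
        linarith [hmin1, hmin2]
      have hw0 : 0 ≤ x - |y| := by linarith
      have hexpf : Real.exp ((νm * ((x - |y| : ℝ) : ℂ)).re)
          ≤ Real.exp (-(c * a) * (x - |y|)) := by
        rw [hre]
        apply Real.exp_le_exp.2
        have := mul_le_mul_of_nonneg_right hm2 hw0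
        nlinarith
      calc ‖(β * νm / γ)‖ * Real.exp ((νm * ((x - |y| : ℝ) : ℂ)).re) *
            ‖(1 - Complex.exp (νm * ((2 * |y| : ℝ) : ℂ)))‖
          ≤ C₁ * ‖β‖ * Real.exp (-(c * a) * (x - |y|)) *
            ((4 * C₁ + 2) * min 1 (a * |y|)) := by
            apply mul_le_mul _ hbr2 (norm_nonneg _) (by positivity)
            exact mul_le_mul (hcoef νm hm1) hexpf (Real.exp_nonneg _) (by positivity)
        _ = (C₁ * ‖β‖ * (4 * C₁ + 2)) *
            (min 1 (a * |y|) * Real.exp (-(c * a) * (x - |y|))) := by ring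
        _ ≤ K * (min 1 (a * |y|) * Real.exp (-(c * a) * (x - |y|))) := by
            apply mul_le_mul_of_nonneg_right _ (by positivity)
            rw [hK_def]; nlinarith
    -- Case B : |y| < -x
    · have hx0 : x < 0 := by nlinarith [abs_nonneg y]
      rw [abs_of_neg hx0]
      have h1 : ¬ (0 ≤ x - y) := by have := neg_abs_le y; push_neg; linarith
      have h2 : ¬ (0 ≤ x + y) := by have := le_abs_self y; push_neg; linarith
      rw [if_neg h1, if_neg h2]
      have harg1 : ((x - y : ℝ) : ℂ) = ((x + |y| : ℝ) : ℂ) + ((-|y| - y : ℝ) : ℂ) := by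
        push_cast; ring
      have harg2 : ((x + y : ℝ) : ℂ) = ((x + |y| : ℝ) : ℂ) + ((y - |y| : ℝ) : ℂ) := by
        push_cast; ring
      have hfac : β * νp / γ * Complex.exp (νp * ((x - y : ℝ) : ℂ)) -
          β * νp / γ * Complex.exp (νp * ((x + y : ℝ) : ℂ)) =
          β * νp / γ * Complex.exp (νp * ((x + |y| : ℝ) : ℂ)) *
            (Complex.exp (νp * ((-|y| - y : ℝ) : ℂ)) -
              Complex.exp (νp * ((y - |y| : ℝ) : ℂ))) := by
        rw [harg1, harg2, mul_add, mul_add, Complex.exp_add, Complex.exp_add]; ring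
      rw [hfac, norm_mul, norm_mul, Complex.norm_exp]
      have hbr : ‖(Complex.exp (νp * ((-|y| - y : ℝ) : ℂ)) -
          Complex.exp (νp * ((y - |y| : ℝ) : ℂ)))‖ =
          ‖(1 - Complex.exp (νp * ((-(2 * |y|) : ℝ) : ℂ)))‖ := by
        rcases le_total 0 y with hy | hy
        · have e0 : (y - |y| : ℝ) = 0 := by rw [abs_of_nonneg hy]; ring
          have e2 : (-|y| - y : ℝ) = -(2 * |y|) := by rw [abs_of_nonneg hy]; ring
          rw [e0, e2, Complex.ofReal_zero, mul_zero, Complex.exp_zero,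
            show Complex.exp (νp * ((-(2 * |y|) : ℝ) : ℂ)) - 1 =
              -(1 - Complex.exp (νp * ((-(2 * |y|) : ℝ) : ℂ))) by ring, norm_neg]
        · have e0 : (-|y| - y : ℝ) = 0 := by rw [abs_of_nonpos hy]; ring
          have e2 : (y - |y| : ℝ) = -(2 * |y|) := by rw [abs_of_nonpos hy]; ring
          rw [e0, e2, Complex.ofReal_zero, mul_zero, Complex.exp_zero]
      rw [hbr]
      have hzre : (νp * ((-(2 * |y|) : ℝ) : ℂ)).re ≤ 0 := by
        rw [hre]
        apply mul_nonpos_of_nonneg_of_nonpos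
        · exact le_trans (by positivity) hp2
        · simp [abs_nonneg y]
      have hzabs : ‖(νp * ((-(2 * |y|) : ℝ) : ℂ))‖ ≤ 2 * C₁ * (a * |y|) := by
        rw [norm_mul, Complex.norm_real, Real.norm_eq_abs, abs_neg,
          abs_of_nonneg (by positivity : (0:ℝ) ≤ 2 * |y|)]
        calc ‖νp‖ * (2 * |y|) ≤ C₁ * a * (2 * |y|) :=
              mul_le_mul_of_nonneg_right hp1 (by positivity)
          _ = 2 * C₁ * (a * |y|) := by ring
      have hbr2 : ‖(1 - Complex.exp (νp * ((-(2 * |y|) : ℝ) : ℂ)))‖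
          ≤ (4 * C₁ + 2) * min 1 (a * |y|) := by
        refine le_trans (one_sub_exp_bound hzre) ?_
        have hmin1 : min 1 (‖(νp * ((-(2 * |y|) : ℝ) : ℂ))‖)
            ≤ min 1 (2 * C₁ * (a * |y|)) := min_le_min le_rfl hzabs
        linarith [hmin1, hmin2]
      have hw0 : x + |y| ≤ 0 := by linarith
      have hexpf : Real.exp ((νp * ((x + |y| : ℝ) : ℂ)).re)
          ≤ Real.exp (-(c * a) * (-x - |y|)) := by
        rw [hre]
        apply Real.exp_le_exp.2
        have := mul_le_mul_of_nonpos_right hp2 hw0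
        nlinarith
      calc ‖(β * νp / γ)‖ * Real.exp ((νp * ((x + |y| : ℝ) : ℂ)).re) *
            ‖(1 - Complex.exp (νp * ((-(2 * |y|) : ℝ) : ℂ)))‖
          ≤ C₁ * ‖β‖ * Real.exp (-(c * a) * (-x - |y|)) *
            ((4 * C₁ + 2) * min 1 (a * |y|)) := by
            apply mul_le_mul _ hbr2 (norm_nonneg _) (by positivity)
            exact mul_le_mul (hcoef νp hp1) hexpf (Real.exp_nonneg _) (by positivity)
        _ = (C₁ * ‖β‖ * (4 * C₁ + 2)) *
            (min 1 (a * |y|) * Real.exp (-(c * a) * (-x - |y|))) := by ring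
        _ ≤ K * (min 1 (a * |y|) * Real.exp (-(c * a) * (-x - |y|))) := by
            apply mul_le_mul_of_nonneg_right _ (by positivity)
            rw [hK_def]; nlinarith
  -- middle case
  · rw [if_neg hxy]
    push_neg at hxy
    have htri : ‖        ((if 0 ≤ x - y then β * νm / γ * Complex.exp (νm * ((x - y : ℝ) : ℂ))
           else β * νp / γ * Complex.exp (νp * ((x - y : ℝ) : ℂ))) -
         (if 0 ≤ x + y then β * νm / γ * Complex.exp (νm * ((x + y : ℝ) : ℂ))
           else β * νp / γ * Complex.exp (νp * ((x + y : ℝ) : ℂ))))‖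
        ≤ C₁ * ‖β‖ * Real.exp (-(c * a) * |x - y|) +
          C₁ * ‖β‖ * Real.exp (-(c * a) * |x + y|) := by
      refine le_trans ?_ (add_le_add (habs_H (x - y)) (habs_H (x + y)))
      exact norm_sub_le _ _
    refine le_trans htri ?_
    have hd1 : |y| - |x| ≤ |x - y| := by
      have := abs_sub_abs_le_abs_sub y x
      rwa [abs_sub_comm] at this
    have hd2 : |y| - |x| ≤ |x + y| := by
      have := abs_sub_abs_le_abs_sub y (-x)
      rw [abs_neg, sub_neg_eq_add, add_comm] at this
      exact this
    have hca : -(c * a) ≤ 0 := by nlinarith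
    have he1 : Real.exp (-(c * a) * |x - y|) ≤ Real.exp (-(c * a) * (|y| - |x|)) :=
      Real.exp_le_exp.2 (mul_le_mul_of_nonpos_left hd1 hca)
    have he2 : Real.exp (-(c * a) * |x + y|) ≤ Real.exp (-(c * a) * (|y| - |x|)) :=
      Real.exp_le_exp.2 (mul_le_mul_of_nonpos_left hd2 hca)
    calc C₁ * ‖β‖ * Real.exp (-(c * a) * |x - y|) +
          C₁ * ‖β‖ * Real.exp (-(c * a) * |x + y|)
        ≤ C₁ * ‖β‖ * Real.exp (-(c * a) * (|y| - |x|)) +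
          C₁ * ‖β‖ * Real.exp (-(c * a) * (|y| - |x|)) := by
          have hcb : 0 ≤ C₁ * ‖β‖ := by positivity
          exact add_le_add (mul_le_mul_of_nonneg_left he1 hcb)
            (mul_le_mul_of_nonneg_left he2 hcb)
      _ = (2 * (C₁ * ‖β‖)) * Real.exp (-(c * a) * (|y| - |x|)) := by ring
      _ ≤ K * Real.exp (-(c * a) * (|y| - |x|)) := by
          apply mul_le_mul_of_nonneg_right _ (Real.exp_nonneg _)
          rw [hK_def]; nlinarith

set_option maxHeartbeats 2000000 in
theorem stmt_4 (r c C₁ : ℝ) (hr : 2 < r) (hc : 0 < c) (hC₁ : 0 < C₁) (β : ℂ) :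
    ∃ C > (0:ℝ), ∀ (γ νm νp : ℂ), γ ≠ 0 →
      ‖νm‖ ≤ C₁ * ‖γ‖ →
      ‖νp‖ ≤ C₁ * ‖γ‖ →
      νm.re ≤ -c * ‖γ‖ →
      c * ‖γ‖ ≤ νp.re →
      ∀ (M : ℝ) (g : ℝ → ℝ), 0 < M → Measurable g →
        (∀ y : ℝ, g (-y) = -g y) →
        (∀ y : ℝ, |g y| ≤ M * Real.sqrt (1 + y ^ 2) ^ (-r)) →
        (∫ x : ℝ, Real.sqrt (1 + x ^ 2) *
            ‖(∫ y : ℝ,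
              (if 0 ≤ x - y then β * νm / γ * Complex.exp (νm * ((x - y : ℝ) : ℂ))
                else β * νp / γ * Complex.exp (νp * ((x - y : ℝ) : ℂ))) * (g y : ℂ))‖)
          ≤ C * M / ‖γ‖ := by
  have hK0 : 0 ≤ C₁ * (‖β‖ + 1) * (4 * C₁ + 4) := by positivity
  set K : ℝ := C₁ * (‖β‖ + 1) * (4 * C₁ + 4) with hK_def
  set K₄ : ℝ := K * (8 / c + 4 / c ^ 2) with hK4_def
  have hK40 : 0 ≤ K₄ := by
    apply mul_nonneg hK0; positivity
  set Ir : ℝ := ∫ y : ℝ, Real.sqrt (1 + y ^ 2) ^ (-(r - 1)) with hIr_def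
  have hIr0 : 0 ≤ Ir :=
    integral_nonneg fun y => Real.rpow_nonneg (Real.sqrt_nonneg _) _
  refine ⟨K₄ * Ir + 1, by nlinarith, ?_⟩
  intro γ νm νp hγ hm1 hp1 hm2 hp2 M g hM hgm hodd hbd
  have ha : 0 < ‖γ‖ := norm_pos_iff.mpr hγ
  set a : ℝ := ‖γ‖ with ha_def
  -- rewrite the goal using Hker
  have hshow : (∫ x : ℝ, Real.sqrt (1 + x ^ 2) *
      ‖(∫ y : ℝ,
        (if 0 ≤ x - y then β * νm / γ * Complex.exp (νm * ((x - y : ℝ) : ℂ))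
          else β * νp / γ * Complex.exp (νp * ((x - y : ℝ) : ℂ))) * (g y : ℂ))‖)
      = ∫ x : ℝ, Real.sqrt (1 + x ^ 2) *
          ‖(∫ y : ℝ, Hker β γ νm νp (x - y) * (g y : ℂ))‖ := rfl
  rw [hshow]
  -- basic facts
  have hHm : Measurable (Hker β γ νm νp) := by
    unfold Hker
    refine Measurable.ite (measurableSet_le measurable_const measurable_id) ?_ ?_
    · exact measurable_const.mul
        (Complex.measurable_exp.comp (Complex.measurable_ofReal.const_mul νm))
    · exact measurable_const.mul
        (Complex.measurable_exp.comp (Complex.measurable_ofReal.const_mul νp))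
  have hgC : Measurable fun y : ℝ => (g y : ℂ) := Complex.measurable_ofReal.comp hgm
  have hjap : Integrable (fun y : ℝ => Real.sqrt (1 + y ^ 2) ^ (-r)) :=
    jap_integrable (by linarith)
  have habsH : ∀ t : ℝ, ‖(Hker β γ νm νp t)‖
      ≤ C₁ * ‖β‖ * Real.exp (-(c * a) * |t|) :=
    Hker_abs hc hC₁ β γ νm νp hγ hm1 hp1 hm2 hp2
  have hnorm : ∀ t : ℝ, ∀ y : ℝ, ‖Hker β γ νm νp t * (g y : ℂ)‖
      ≤ C₁ * ‖β‖ * M * Real.sqrt (1 + y ^ 2) ^ (-r) := by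
    intro t y
    rw [norm_mul, Complex.norm_real, Real.norm_eq_abs]
    have h1 : ‖(Hker β γ νm νp t)‖ ≤ C₁ * ‖β‖ := by
      refine le_trans (habsH t) ?_
      have : Real.exp (-(c * a) * |t|) ≤ 1 :=
        Real.exp_le_one_iff.2 (by nlinarith [mul_nonneg (mul_nonneg hc.le ha.le) (abs_nonneg t)])
      nlinarith [mul_le_mul_of_nonneg_left this (by positivity : (0:ℝ) ≤ C₁ * ‖β‖)]
    calc ‖(Hker β γ νm νp t)‖ * |g y|
        ≤ (C₁ * ‖β‖) * (M * Real.sqrt (1 + y ^ 2) ^ (-r)) :=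
          mul_le_mul h1 (hbd y) (abs_nonneg _) (by positivity)
      _ = C₁ * ‖β‖ * M * Real.sqrt (1 + y ^ 2) ^ (-r) := by ring
  have hint1 : ∀ x : ℝ, Integrable fun y : ℝ => Hker β γ νm νp (x - y) * (g y : ℂ) := by
    intro x
    refine (hjap.const_mul (C₁ * ‖β‖ * M)).mono'
      (((hHm.comp (measurable_const.sub measurable_id)).mul hgC).aestronglyMeasurable)
      (Filter.Eventually.of_forall fun y => ?_)
    exact le_of_le_of_eq (hnorm (x - y) y) (by ring)
  have hint2 : ∀ x : ℝ, Integrable fun y : ℝ => Hker β γ νm νp (x + y) * (g y : ℂ) := by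
    intro x
    refine (hjap.const_mul (C₁ * ‖β‖ * M)).mono'
      (((hHm.comp (measurable_const.add measurable_id)).mul hgC).aestronglyMeasurable)
      (Filter.Eventually.of_forall fun y => ?_)
    exact le_of_le_of_eq (hnorm (x + y) y) (by ring)
  -- oddness
  have hIodd : ∀ x : ℝ, (∫ y : ℝ, Hker β γ νm νp (x + y) * (g y : ℂ))
      = - ∫ y : ℝ, Hker β γ νm νp (x - y) * (g y : ℂ) := by
    intro x
    have h := integral_neg_eq_self (fun y : ℝ => Hker β γ νm νp (x + y) * (g y : ℂ)) volume
    rw [← h]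
    have hptw : ∀ y : ℝ, Hker β γ νm νp (x + -y) * ((g (-y) : ℝ) : ℂ)
        = -(Hker β γ νm νp (x - y) * (g y : ℂ)) := by
      intro y
      rw [hodd y, show x + -y = x - y by ring]
      push_cast
      ring
    simp_rw [hptw, integral_neg]
  have h2I : ∀ x : ℝ, (∫ y : ℝ, (Hker β γ νm νp (x - y) - Hker β γ νm νp (x + y)) * (g y : ℂ))
      = (2:ℂ) * ∫ y : ℝ, Hker β γ νm νp (x - y) * (g y : ℂ) := by
    intro x
    simp_rw [sub_mul]
    rw [integral_sub (hint1 x) (hint2 x), hIodd x]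
    ring
  -- measurability of the outer integrand
  have hI_sm : StronglyMeasurable fun x : ℝ => ∫ y : ℝ, Hker β γ νm νp (x - y) * (g y : ℂ) := by
    have hm : StronglyMeasurable fun p : ℝ × ℝ => Hker β γ νm νp (p.1 - p.2) * (g p.2 : ℂ) :=
      ((hHm.comp (measurable_fst.sub measurable_snd)).mul
        (hgC.comp measurable_snd)).stronglyMeasurable
    exact hm.integral_prod_right'
  have hf_meas : AEStronglyMeasurable (fun x : ℝ => Real.sqrt (1 + x ^ 2) *
      ‖(∫ y : ℝ, Hker β γ νm νp (x - y) * (g y : ℂ))‖) volume := by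
    apply AEStronglyMeasurable.mul
    · exact (Real.continuous_sqrt.comp (by continuity)).aestronglyMeasurable
    · exact (continuous_norm.comp_stronglyMeasurable hI_sm).aestronglyMeasurable
  rw [integral_eq_lintegral_of_nonneg_ae
    (Filter.Eventually.of_forall fun x => by positivity) hf_meas]
  refine ENNReal.toReal_le_of_le_ofReal (by positivity) ?_
  -- pointwise bound for the inner integral
  have key_pt : ∀ x : ℝ, ENNReal.ofReal (Real.sqrt (1 + x ^ 2) *
      ‖(∫ y : ℝ, Hker β γ νm νp (x - y) * (g y : ℂ))‖)
      ≤ ∫⁻ y : ℝ, ENNReal.ofReal (Real.sqrt (1 + x ^ 2) *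
          (Phi K a c x y * (M * Real.sqrt (1 + y ^ 2) ^ (-r)))) := by
    intro x
    rw [ENNReal.ofReal_mul (Real.sqrt_nonneg _)]
    have habsI : ENNReal.ofReal
        (‖(∫ y : ℝ, Hker β γ νm νp (x - y) * (g y : ℂ))‖)
        ≤ ∫⁻ y : ℝ, ENNReal.ofReal (Phi K a c x y * (M * Real.sqrt (1 + y ^ 2) ^ (-r))) := by
      have e1 : ‖(∫ y : ℝ, Hker β γ νm νp (x - y) * (g y : ℂ))‖
          ≤ ‖(∫ y : ℝ,
              (Hker β γ νm νp (x - y) - Hker β γ νm νp (x + y)) * (g y : ℂ))‖ := by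
        rw [h2I x, norm_mul, Complex.norm_two]
        nlinarith [norm_nonneg (∫ y : ℝ, Hker β γ νm νp (x - y) * (g y : ℂ))]
      refine le_trans (ENNReal.ofReal_le_ofReal e1) ?_
      rw [ofReal_norm]
      refine le_trans (enorm_integral_le_lintegral_enorm _) ?_
      refine lintegral_mono fun y => ?_
      rw [← ofReal_norm]
      apply ENNReal.ofReal_le_ofReal
      rw [norm_mul, Complex.norm_real, Real.norm_eq_abs]
      exact mul_le_mul (kernel_bd hc hC₁ β γ νm νp hγ hm1 hp1 hm2 hp2 x y) (hbd y)
        (abs_nonneg _) (Phi_nonneg hK0 ha.le x y)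
    calc ENNReal.ofReal (Real.sqrt (1 + x ^ 2)) *
          ENNReal.ofReal (‖(∫ y : ℝ, Hker β γ νm νp (x - y) * (g y : ℂ))‖)
        ≤ ENNReal.ofReal (Real.sqrt (1 + x ^ 2)) *
          ∫⁻ y : ℝ, ENNReal.ofReal (Phi K a c x y * (M * Real.sqrt (1 + y ^ 2) ^ (-r))) :=
          mul_le_mul_right habsI _
      _ = ∫⁻ y : ℝ, ENNReal.ofReal (Real.sqrt (1 + x ^ 2)) *
          ENNReal.ofReal (Phi K a c x y * (M * Real.sqrt (1 + y ^ 2) ^ (-r))) :=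
          (lintegral_const_mul' _ _ ENNReal.ofReal_ne_top).symm
      _ = ∫⁻ y : ℝ, ENNReal.ofReal (Real.sqrt (1 + x ^ 2) *
          (Phi K a c x y * (M * Real.sqrt (1 + y ^ 2) ^ (-r)))) := by
          congr 1
          funext y
          rw [← ENNReal.ofReal_mul (Real.sqrt_nonneg _)]
  -- measurability for Tonelli
  have hΦm : Measurable fun p : ℝ × ℝ => Phi K a c p.1 p.2 := by
    unfold Phi
    apply Measurable.const_mul
    refine Measurable.ite (measurableSet_lt measurable_snd.abs measurable_fst.abs) ?_ ?_
    · exact (measurable_const.min (measurable_snd.abs.const_mul a)).mul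
        (Real.measurable_exp.comp ((measurable_fst.abs.sub measurable_snd.abs).const_mul _))
    · exact Real.measurable_exp.comp ((measurable_snd.abs.sub measurable_fst.abs).const_mul _)
  have hprod_meas : Measurable fun p : ℝ × ℝ => ENNReal.ofReal (Real.sqrt (1 + p.1 ^ 2) *
      (Phi K a c p.1 p.2 * (M * Real.sqrt (1 + p.2 ^ 2) ^ (-r)))) := by
    apply Measurable.ennreal_ofReal
    refine Measurable.mul ?_ (hΦm.mul ?_)
    · exact ((Real.continuous_sqrt.comp (show Continuous fun x : ℝ => 1 + x ^ 2 by continuity)).measurable).comp measurable_fst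
    · exact (((jap_cont r).measurable).comp measurable_snd).const_mul M
  -- main chain
  calc (∫⁻ x : ℝ, ENNReal.ofReal (Real.sqrt (1 + x ^ 2) *
        ‖(∫ y : ℝ, Hker β γ νm νp (x - y) * (g y : ℂ))‖))
      ≤ ∫⁻ x : ℝ, ∫⁻ y : ℝ, ENNReal.ofReal (Real.sqrt (1 + x ^ 2) *
          (Phi K a c x y * (M * Real.sqrt (1 + y ^ 2) ^ (-r)))) := lintegral_mono key_pt
    _ = ∫⁻ y : ℝ, ∫⁻ x : ℝ, ENNReal.ofReal (Real.sqrt (1 + x ^ 2) *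
          (Phi K a c x y * (M * Real.sqrt (1 + y ^ 2) ^ (-r)))) :=
        lintegral_lintegral_swap hprod_meas.aemeasurable
    _ ≤ ∫⁻ y : ℝ, ENNReal.ofReal ((M * Real.sqrt (1 + y ^ 2) ^ (-r)) *
          (K₄ * Real.sqrt (1 + y ^ 2) / a)) := by
        refine lintegral_mono fun y => ?_
        have hconst : ∀ x : ℝ, Real.sqrt (1 + x ^ 2) *
            (Phi K a c x y * (M * Real.sqrt (1 + y ^ 2) ^ (-r)))
            = (M * Real.sqrt (1 + y ^ 2) ^ (-r)) * (Real.sqrt (1 + x ^ 2) * Phi K a c x y) :=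
          fun x => by ring
        simp_rw [hconst, ENNReal.ofReal_mul (show (0:ℝ) ≤ M * Real.sqrt (1 + y ^ 2) ^ (-r)
          by positivity)]
        rw [lintegral_const_mul' _ _ ENNReal.ofReal_ne_top]
        exact mul_le_mul_right (x_bound hK0 ha hc y) _
    _ ≤ ENNReal.ofReal ((K₄ * Ir + 1) * M / a) := by
        have hpt2 : ∀ y : ℝ, (M * Real.sqrt (1 + y ^ 2) ^ (-r)) *
            (K₄ * Real.sqrt (1 + y ^ 2) / a)
            = (M * K₄ / a) * Real.sqrt (1 + y ^ 2) ^ (-(r - 1)) := by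
          intro y
          rw [show -(r - 1) = (-r) + 1 by ring, Real.rpow_add (br_pos y), Real.rpow_one]
          ring
        simp_rw [hpt2, ENNReal.ofReal_mul (show (0:ℝ) ≤ M * K₄ / a by positivity)]
        rw [lintegral_const_mul' _ _ ENNReal.ofReal_ne_top,
          ← ofReal_integral_eq_lintegral_ofReal (jap_integrable (by linarith : 1 < r - 1))
            (Filter.Eventually.of_forall fun y =>
              Real.rpow_nonneg (Real.sqrt_nonneg _) _),
          ← hIr_def, ← ENNReal.ofReal_mul (by positivity)]
        apply ENNReal.ofReal_le_ofReal
        have h1 : M * K₄ / a * Ir = (K₄ * Ir) * (M / a) := by ring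
        have h2 : (K₄ * Ir + 1) * M / a = (K₄ * Ir + 1) * (M / a) := by ring
        rw [h1, h2]
        have : 0 ≤ M / a := by positivity
        nlinarith
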